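/- arXiv:1909.05556 — 2 statements merged into one kernel-verified Lean document; each statement's English description precedes it below -/
import Mathlib

section
/- Let T be a Hausdorff topological space and d ≥ 1 an integer. Let q : Sym^{d−1}(T) × T → Sym^d(T) be the map ({x_1,…,x_{d−1}}, x) ↦ {x_1,…,x_{d−1}, x}, and let PConf_d(T) = q^{−1}(UConf_d(T)), the space of d-element subsets of T with one distinguished point. Then the restriction r : PConf_d(T) → UConf_d(T) of q is a d-fold covering map. -/
/-- The setoid on `Fin d → T` identifying tuples that differ by a permutation. -/
def symSetoid (T : Type*) (d : ℕ) : Setoid (Fin d → T) where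
  r f g := ∃ σ : Equiv.Perm (Fin d), f ∘ σ = g
  iseqv := by
    refine ⟨fun f => ⟨Equiv.refl _, rfl⟩, ?_, ?_⟩
    · rintro f g ⟨σ, rfl⟩
      exact ⟨σ.symm, by funext i; simp⟩
    · rintro f g h ⟨σ, rfl⟩ ⟨τ, rfl⟩
      exact ⟨τ.trans σ, rfl⟩

/-- The `d`-th symmetric power of `T`: the quotient of `T^d` by the permutation action of the
symmetric group `S_d`. -/
def SymPow (T : Type*) (d : ℕ) : Type _ := Quotient (symSetoid T d)

instance SymPow.instTopologicalSpace (T : Type*) [TopologicalSpace T] (d : ℕ) :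
    TopologicalSpace (SymPow T d) :=
  instTopologicalSpaceQuotient

/-- The quotient map `T^d → Sym^d(T)`. -/
def SymPow.mk {T : Type*} {d : ℕ} (f : Fin d → T) : SymPow T d := Quotient.mk _ f

/-- A point of `Sym^d(T)` is simple if it is the class of an injective tuple, i.e. it lies in
the complement `UConf_d(T)` of the image `Σ` of the big diagonal. -/
def SymPow.Simple {T : Type*} {d : ℕ} (x : SymPow T d) : Prop :=
  ∃ f : Fin d → T, Function.Injective f ∧ SymPow.mk f = x

/-- The unordered configuration space `UConf_d(T) = Sym^d(T) ∖ Σ`, the space of `d`-element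
subsets of `T`. -/
def UConf (T : Type*) [TopologicalSpace T] (d : ℕ) : Type _ :=
  {x : SymPow T d // x.Simple}

instance UConf.instTopologicalSpace (T : Type*) [TopologicalSpace T] (d : ℕ) :
    TopologicalSpace (UConf T d) :=
  inferInstanceAs (TopologicalSpace {x : SymPow T d // x.Simple})


namespace SymPowAux

open Function Set Equiv

variable {T : Type*} {d : ℕ}

theorem mk_eq_mk_iff {f g : Fin d → T} :
    SymPow.mk f = SymPow.mk g ↔ ∃ σ : Equiv.Perm (Fin d), f ∘ σ = g :=
  ⟨fun h => Quotient.exact h, fun h => Quotient.sound h⟩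

theorem mk_comp_perm (f : Fin d → T) (σ : Equiv.Perm (Fin d)) :
    SymPow.mk (f ∘ σ) = SymPow.mk f :=
  Quotient.sound ⟨σ.symm, by funext i; simp⟩

theorem mk_surjective : Function.Surjective (SymPow.mk : (Fin d → T) → SymPow T d) :=
  Quotient.mk_surjective

section Top
variable [TopologicalSpace T]

theorem continuous_mk : Continuous (SymPow.mk : (Fin d → T) → SymPow T d) :=
  continuous_quotient_mk'

theorem continuous_comp_perm (σ : Equiv.Perm (Fin d)) :
    Continuous (fun g : Fin d → T => g ∘ σ) :=
  continuous_pi fun i => continuous_apply (σ i)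

theorem isOpenMap_mk : IsOpenMap (SymPow.mk : (Fin d → T) → SymPow T d) := by
  intro O hO
  have key : SymPow.mk ⁻¹' (SymPow.mk '' O) =
      ⋃ σ : Equiv.Perm (Fin d), (fun g : Fin d → T => g ∘ σ) ⁻¹' O := by
    ext g
    simp only [Set.mem_preimage, Set.mem_image, Set.mem_iUnion]
    constructor
    · rintro ⟨h, hhO, hh⟩
      obtain ⟨σ, rfl⟩ := mk_eq_mk_iff.mp hh.symm
      exact ⟨σ, hhO⟩
    · rintro ⟨σ, hσ⟩
      exact ⟨g ∘ σ, hσ, mk_comp_perm g σ⟩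
  refine (isQuotientMap_quotient_mk' (s := symSetoid T d)).isOpen_preimage.mp ?_
  show IsOpen (SymPow.mk ⁻¹' (SymPow.mk '' O))
  rw [key]
  exact isOpen_iUnion fun σ => (continuous_comp_perm σ).isOpen_preimage O hO

theorem isOpenQuotientMap_mk :
    IsOpenQuotientMap (SymPow.mk : (Fin d → T) → SymPow T d) :=
  ⟨mk_surjective, continuous_mk, isOpenMap_mk⟩

end Top

theorem exists_disjoint_opens [TopologicalSpace T] [T2Space T] {n : ℕ}
    (f : Fin n → T) (hf : Function.Injective f) :
    ∃ U : Fin n → Set T, (∀ i, IsOpen (U i)) ∧ (∀ i, f i ∈ U i) ∧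
      ∀ i j, i ≠ j → Disjoint (U i) (U j) := by
  have sep : ∀ i j : Fin n, ∃ A B : Set T, IsOpen A ∧ IsOpen B ∧
      (i ≠ j → f i ∈ A ∧ f j ∈ B ∧ Disjoint A B) := by
    intro i j
    by_cases h : i = j
    · exact ⟨univ, univ, isOpen_univ, isOpen_univ, fun hij => absurd h hij⟩
    · obtain ⟨A, B, hA, hB, hiA, hjB, hAB⟩ := t2_separation (hf.ne h)
      exact ⟨A, B, hA, hB, fun _ => ⟨hiA, hjB, hAB⟩⟩
  choose A B hA hB hsep using sep
  refine ⟨fun i => ⋂ j, ⋂ (_ : i ≠ j), (A i j ∩ B j i), ?_, ?_, ?_⟩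
  · intro i
    exact isOpen_iInter_of_finite fun j => isOpen_iInter_of_finite fun _ =>
      (hA i j).inter (hB j i)
  · intro i
    refine mem_iInter.2 fun j => mem_iInter.2 fun hij => ?_
    exact ⟨(hsep i j hij).1, (hsep j i (Ne.symm hij)).2.1⟩
  · intro i j hij
    have h1 : (⋂ k, ⋂ (_ : i ≠ k), (A i k ∩ B k i)) ⊆ A i j := fun x hx =>
      (mem_iInter.1 (mem_iInter.1 hx j) hij).1
    have h2 : (⋂ k, ⋂ (_ : j ≠ k), (A j k ∩ B k j)) ⊆ B i j := fun x hx =>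
      (mem_iInter.1 (mem_iInter.1 hx i) (Ne.symm hij)).2
    exact Set.disjoint_of_subset h1 h2 (hsep i j hij).2.2

theorem exists_perm_snoc_succAbove {m : ℕ} (i : Fin (m + 1)) :
    ∃ σ : Equiv.Perm (Fin (m + 1)),
      (∀ j : Fin m, σ (Fin.castSucc j) = i.succAbove j) ∧ σ (Fin.last m) = i := by
  have hinj : Function.Injective (Fin.snoc (Fin.succAbove i) i : Fin (m + 1) → Fin (m + 1)) := by
    intro a b hab
    induction a using Fin.lastCases with
    | last =>
      induction b using Fin.lastCases with
      | last => rfl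
      | cast b =>
        rw [Fin.snoc_last, Fin.snoc_castSucc] at hab
        exact absurd hab.symm (Fin.succAbove_ne i b)
    | cast a =>
      induction b using Fin.lastCases with
      | last =>
        rw [Fin.snoc_last, Fin.snoc_castSucc] at hab
        exact absurd hab (Fin.succAbove_ne i a)
      | cast b =>
        rw [Fin.snoc_castSucc, Fin.snoc_castSucc] at hab
        exact congrArg Fin.castSucc (i.succAbove_right_injective hab)
  refine ⟨Equiv.ofBijective _ hinj.bijective_of_finite, fun j => ?_, ?_⟩
  · simp [Equiv.ofBijective]
  · simp [Equiv.ofBijective]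

theorem exists_perm_factor {m : ℕ} (τ : Equiv.Perm (Fin (m + 1))) (i : Fin (m + 1))
    (hτ : τ (Fin.last m) = i) :
    ∃ π : Equiv.Perm (Fin m), ∀ j, i.succAbove (π j) = τ (Fin.castSucc j) := by
  have h : ∀ j : Fin m, ∃ k : Fin m, i.succAbove k = τ (Fin.castSucc j) := by
    intro j
    apply Fin.exists_succAbove_eq
    rw [← hτ]
    intro hcontra
    exact absurd (τ.injective hcontra) (Fin.ne_last_of_lt (Fin.castSucc_lt_last j)).elim
  choose π hπ using h
  have hπinj : Function.Injective π := by
    intro a b hab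
    have := hπ a
    rw [hab, hπ b] at this
    exact Fin.castSucc_injective m (τ.injective this.symm)
  exact ⟨Equiv.ofBijective π hπinj.bijective_of_finite, fun j => hπ j⟩

theorem mk_snoc_succAbove {m : ℕ} (g : Fin (m + 1) → T) (i : Fin (m + 1)) :
    SymPow.mk (Fin.snoc (g ∘ i.succAbove) (g i)) = SymPow.mk g := by
  obtain ⟨σ, hσc, hσl⟩ := exists_perm_snoc_succAbove i
  rw [← mk_comp_perm g σ]
  congr 1
  funext j
  induction j using Fin.lastCases with
  | last => simp [hσl]
  | cast j => simp [hσc j]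

theorem continuous_q [TopologicalSpace T] {m : ℕ} (q : SymPow T m × T → SymPow T (m + 1))
    (hq : ∀ (g : Fin m → T) (x : T), q (SymPow.mk g, x) = SymPow.mk (Fin.snoc g x)) :
    Continuous q := by
  have hoq : IsOpenQuotientMap (Prod.map (SymPow.mk : (Fin m → T) → SymPow T m) (id : T → T)) :=
    ⟨mk_surjective.prodMap surjective_id, continuous_mk.prodMap continuous_id,
      isOpenMap_mk.prodMap IsOpenMap.id⟩
  rw [← hoq.continuous_comp_iff]
  have : q ∘ Prod.map SymPow.mk id = fun p : (Fin m → T) × T => SymPow.mk (Fin.snoc p.1 p.2) :=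
    funext fun p => hq p.1 p.2
  rw [this]
  refine continuous_mk.comp (continuous_pi fun j => ?_)
  induction j using Fin.lastCases with
  | last => simpa using continuous_snd
  | cast j =>
    simp only [Fin.snoc_castSucc]
    exact (continuous_apply j).comp continuous_fst

def satSet {T : Type*} {d : ℕ} (U : Fin d → Set T) : Set (Fin d → T) :=
  {g | ∃ σ : Equiv.Perm (Fin d), ∀ j, g j ∈ U (σ j)}

def boxSet {T : Type*} {d : ℕ} (U : Fin d → Set T) : Set (Fin d → T) :=
  {g | ∀ j, g j ∈ U j}

def wSet {T : Type*} {d : ℕ} (U : Fin d → Set T) : Set (SymPow T d) :=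
  SymPow.mk '' satSet U

theorem box_subset_sat {U : Fin d → Set T} : boxSet U ⊆ satSet U := fun g hg =>
  ⟨Equiv.refl _, fun j => hg j⟩

theorem mem_wSet_mk_iff {U : Fin d → Set T} {g : Fin d → T} :
    SymPow.mk g ∈ wSet U ↔ g ∈ satSet U := by
  constructor
  · rintro ⟨h, ⟨σ, hσ⟩, hh⟩
    obtain ⟨τ, rfl⟩ := mk_eq_mk_iff.mp hh
    exact ⟨τ.trans σ, fun j => hσ (τ j)⟩
  · intro hg
    exact ⟨g, hg, rfl⟩

theorem isOpen_wSet [TopologicalSpace T] {U : Fin d → Set T} (hUo : ∀ i, IsOpen (U i)) :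
    IsOpen (wSet U) := by
  refine (isQuotientMap_quotient_mk' (s := symSetoid T d)).isOpen_preimage.mp ?_
  show IsOpen (SymPow.mk ⁻¹' wSet U)
  have : SymPow.mk ⁻¹' (wSet U) = ⋃ σ : Equiv.Perm (Fin d), Set.pi univ (fun j => U (σ j)) := by
    ext g
    rw [Set.mem_preimage, mem_wSet_mk_iff]
    simp only [Set.mem_iUnion, Set.mem_pi, Set.mem_univ, forall_true_left]
    exact Iff.rfl
  rw [this]
  exact isOpen_iUnion fun σ => isOpen_set_pi finite_univ fun j _ => hUo (σ j)

theorem sat_injective {U : Fin d → Set T} (hUd : ∀ i j, i ≠ j → Disjoint (U i) (U j))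
    {g : Fin d → T} (hg : g ∈ satSet U) : Function.Injective g := by
  obtain ⟨σ, hσ⟩ := hg
  intro a b hab
  by_contra hne
  have hd := hUd (σ a) (σ b) (fun h => hne (σ.injective h))
  exact Set.disjoint_left.mp hd (hσ a) (hab ▸ hσ b)

theorem wSet_simple {U : Fin d → Set T} (hUd : ∀ i j, i ≠ j → Disjoint (U i) (U j))
    {x : SymPow T d} (hx : x ∈ wSet U) : x.Simple := by
  obtain ⟨g, hg, rfl⟩ := hx
  exact ⟨g, sat_injective hUd hg, rfl⟩

theorem box_unique {U : Fin d → Set T} (hUd : ∀ i j, i ≠ j → Disjoint (U i) (U j))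
    {g g' : Fin d → T} (hg : g ∈ boxSet U) (hg' : g' ∈ boxSet U)
    (h : SymPow.mk g = SymPow.mk g') : g = g' := by
  obtain ⟨τ, rfl⟩ := mk_eq_mk_iff.mp h
  have : ∀ j, τ j = j := by
    intro j
    by_contra hne
    exact Set.disjoint_left.mp (hUd (τ j) j hne) (hg (τ j)) (hg' j)
  funext j
  simp [Function.comp, this j]

open Classical in
noncomputable def nrep {T : Type*} {d : ℕ} (U : Fin d → Set T) (f₀ : Fin d → T)
    (x : SymPow T d) : Fin d → T :=
  if h : ∃ g, g ∈ boxSet U ∧ SymPow.mk g = x then h.choose else f₀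

theorem nrep_mem {U : Fin d → Set T} {f₀ : Fin d → T} {x : SymPow T d} (hx : x ∈ wSet U) :
    nrep U f₀ x ∈ boxSet U ∧ SymPow.mk (nrep U f₀ x) = x := by
  obtain ⟨g, ⟨σ, hσ⟩, rfl⟩ := hx
  have h : ∃ g', g' ∈ boxSet U ∧ SymPow.mk g' = SymPow.mk g :=
    ⟨g ∘ σ.symm, fun j => by simpa using hσ (σ.symm j), mk_comp_perm g σ.symm⟩
  rw [nrep, dif_pos h]
  exact h.choose_spec

theorem nrep_eq {U : Fin d → Set T} (hUd : ∀ i j, i ≠ j → Disjoint (U i) (U j))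
    {f₀ g : Fin d → T} {x : SymPow T d} (hg : g ∈ boxSet U) (hgx : SymPow.mk g = x) :
    nrep U f₀ x = g := by
  have hx : x ∈ wSet U := hgx ▸ ⟨g, box_subset_sat hg, rfl⟩
  obtain ⟨h1, h2⟩ := nrep_mem (f₀ := f₀) hx
  exact box_unique hUd h1 hg (h2.trans hgx.symm)

theorem continuousOn_nrep [TopologicalSpace T] {U : Fin d → Set T}
    (hUo : ∀ i, IsOpen (U i)) (hUd : ∀ i j, i ≠ j → Disjoint (U i) (U j))
    (f₀ : Fin d → T) : ContinuousOn (nrep U f₀) (wSet U) := by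
  rw [continuousOn_iff']
  intro t ht
  refine ⟨SymPow.mk '' (t ∩ boxSet U), isOpenMap_mk _ (ht.inter ?_), ?_⟩
  · have : boxSet U = Set.pi univ U := by
      ext g; simp [boxSet, Set.mem_pi]
    rw [this]
    exact isOpen_set_pi finite_univ fun j _ => hUo j
  · ext x
    simp only [Set.mem_inter_iff, Set.mem_preimage, Set.mem_image]
    constructor
    · rintro ⟨hxt, hxW⟩
      obtain ⟨h1, h2⟩ := nrep_mem (f₀ := f₀) hxW
      exact ⟨⟨nrep U f₀ x, ⟨hxt, h1⟩, h2⟩, hxW⟩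
    · rintro ⟨⟨g, ⟨hgt, hgB⟩, rfl⟩, hxW⟩
      rw [nrep_eq hUd hgB rfl]
      exact ⟨hgt, hxW⟩

open Classical in
noncomputable def nind {T : Type*} {m : ℕ} (U : Fin (m + 1) → Set T) (x : T) : Fin (m + 1) :=
  if h : ∃ i, x ∈ U i then h.choose else 0

theorem nind_eq {m : ℕ} {U : Fin (m + 1) → Set T}
    (hUd : ∀ i j, i ≠ j → Disjoint (U i) (U j)) {x : T} {i : Fin (m + 1)} (hx : x ∈ U i) :
    nind U x = i := by
  have h : ∃ j, x ∈ U j := ⟨i, hx⟩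
  rw [nind, dif_pos h]
  by_contra hne
  exact Set.disjoint_left.mp (hUd _ _ hne) h.choose_spec hx

theorem exists_trivialization [TopologicalSpace T] [T2Space T] {m : ℕ}
    (q : SymPow T m × T → SymPow T (m + 1))
    (hq : ∀ (g : Fin m → T) (x : T), q (SymPow.mk g, x) = SymPow.mk (Fin.snoc g x))
    (y : UConf T (m + 1)) :
    ∃ t : Bundle.Trivialization (Fin (m + 1))
        (fun z : {z : SymPow T m × T // (q z).Simple} => (⟨q z.1, z.2⟩ : UConf T (m + 1))),
      y ∈ t.baseSet := by
  classical
  obtain ⟨f, hfinj, hfy⟩ := y.2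
  obtain ⟨U, hUo, hfU, hUd⟩ := exists_disjoint_opens f hfinj
  have hqc : Continuous q := continuous_q q hq
  -- generic facts
  have hqW : ∀ z : SymPow T m × T, q z ∈ wSet U →
      ∃ g₀ : Fin m → T, SymPow.mk g₀ = z.1 ∧ Fin.snoc g₀ z.2 ∈ satSet U := by
    rintro ⟨c, x⟩ h
    obtain ⟨g₀, rfl⟩ := mk_surjective c
    rw [hq] at h
    exact ⟨g₀, rfl, mem_wSet_mk_iff.mp h⟩
  have hsimp : ∀ (x : SymPow T (m + 1)) (i : Fin (m + 1)), x ∈ wSet U →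
      (q (SymPow.mk (nrep U f x ∘ i.succAbove), nrep U f x i)).Simple ∧
        q (SymPow.mk (nrep U f x ∘ i.succAbove), nrep U f x i) = x := by
    intro x i hx
    obtain ⟨hb, hmk⟩ := nrep_mem (f₀ := f) hx
    have heq : q (SymPow.mk (nrep U f x ∘ i.succAbove), nrep U f x i) = x := by
      rw [hq, mk_snoc_succAbove, hmk]
    refine ⟨?_, heq⟩
    rw [heq]
    exact wSet_simple hUd hx
  have hz₀ : (q (SymPow.mk (f ∘ (0 : Fin (m + 1)).succAbove), f 0)).Simple := by
    rw [hq, mk_snoc_succAbove]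
    exact ⟨f, hfinj, rfl⟩
  refine ⟨{
      toFun := fun z => (⟨q z.1, z.2⟩, nind U z.1.2),
      invFun := fun p =>
        if h : p.1.1 ∈ wSet U then
          ⟨(SymPow.mk (nrep U f p.1.1 ∘ p.2.succAbove), nrep U f p.1.1 p.2),
            (hsimp p.1.1 p.2 h).1⟩
        else ⟨(SymPow.mk (f ∘ (0 : Fin (m + 1)).succAbove), f 0), hz₀⟩,
      source := (fun z : {z : SymPow T m × T // (q z).Simple} => q z.1) ⁻¹' (wSet U),
      target := (Subtype.val ⁻¹' wSet U) ×ˢ (univ : Set (Fin (m + 1))),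
      map_source' := fun z hz => ⟨hz, mem_univ _⟩,
      map_target' := ?_,
      left_inv' := ?_,
      right_inv' := ?_,
      open_source := (isOpen_wSet hUo).preimage (hqc.comp continuous_subtype_val),
      open_target := (((isOpen_wSet hUo).preimage continuous_subtype_val)).prod isOpen_univ,
      continuousOn_toFun := ?_,
      continuousOn_invFun := ?_,
      baseSet := Subtype.val ⁻¹' wSet U,
      open_baseSet := (isOpen_wSet hUo).preimage continuous_subtype_val,
      source_eq := rfl,
      target_eq := rfl,
      proj_toFun := fun p _ => rfl }, ?_⟩
  · -- map_target'
    rintro ⟨v, i⟩ ⟨hv, -⟩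
    have hv' : (v : {x : SymPow T (m + 1) // x.Simple}).1 ∈ wSet U := hv
    simp only [Set.mem_preimage, dif_pos hv']
    show q (SymPow.mk (nrep U f v.1 ∘ i.succAbove), nrep U f v.1 i) ∈ wSet U
    rw [(hsimp v.1 i hv').2]
    exact hv'
  · -- left_inv'
    rintro ⟨⟨c, x⟩, hz⟩ hzs
    have hzs' : q (c, x) ∈ wSet U := hzs
    obtain ⟨g₀, hg₀, hsat⟩ := hqW (c, x) hzs'
    replace hg₀ : SymPow.mk g₀ = c := hg₀
    obtain ⟨hgB, hgmk⟩ := nrep_mem (f₀ := f) hzs'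
    have hmk2 : SymPow.mk (nrep U f (q (c, x))) = SymPow.mk (Fin.snoc g₀ x) := by
      rw [hgmk]
      rw [← hg₀, hq]
    obtain ⟨τ, hτ⟩ := mk_eq_mk_iff.mp hmk2
    have hxval : nrep U f (q (c, x)) (τ (Fin.last m)) = x := by
      have := congrFun hτ (Fin.last m)
      simpa using this
    have hxUi : x ∈ U (τ (Fin.last m)) := hxval ▸ hgB (τ (Fin.last m))
    have hind : nind U x = τ (Fin.last m) := nind_eq hUd hxUi
    obtain ⟨π, hπ⟩ := exists_perm_factor τ (τ (Fin.last m)) rfl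
    have hcomp : SymPow.mk (nrep U f (q (c, x)) ∘ (τ (Fin.last m)).succAbove) = c := by
      rw [← mk_comp_perm (nrep U f (q (c, x)) ∘ (τ (Fin.last m)).succAbove) π]
      have h1 : (nrep U f (q (c, x)) ∘ (τ (Fin.last m)).succAbove) ∘ π = g₀ := by
        funext j
        show nrep U f (q (c, x)) ((τ (Fin.last m)).succAbove (π j)) = g₀ j
        rw [hπ j]
        have := congrFun hτ (Fin.castSucc j)
        simpa using this
      rw [h1, hg₀]
    have hcond : ((⟨q (c, x), hz⟩ : UConf T (m + 1)), nind U x).1.1 ∈ wSet U := hzs'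
    simp only [dif_pos hcond]
    refine Subtype.ext (Prod.ext ?_ ?_)
    · show SymPow.mk (nrep U f (q (c, x)) ∘ (nind U x).succAbove) = c
      rw [hind]
      exact hcomp
    · show nrep U f (q (c, x)) (nind U x) = x
      rw [hind]
      exact hxval
  · -- right_inv'
    rintro ⟨v, i⟩ ⟨hv, -⟩
    have hv' : (v : {x : SymPow T (m + 1) // x.Simple}).1 ∈ wSet U := hv
    obtain ⟨hgB, hgmk⟩ := nrep_mem (f₀ := f) hv'
    simp only [dif_pos hv']
    refine Prod.ext (Subtype.ext ?_) ?_
    · exact (hsimp v.1 i hv').2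
    · exact nind_eq hUd (hgB i)
  · -- continuousOn_toFun
    have hproj : Continuous (fun z : {z : SymPow T m × T // (q z).Simple} =>
        (⟨q z.1, z.2⟩ : UConf T (m + 1))) :=
      (hqc.comp continuous_subtype_val).subtype_mk _
    refine ContinuousOn.prodMk hproj.continuousOn ?_
    intro z hz
    apply ContinuousAt.continuousWithinAt
    obtain ⟨g₀, hg₀, σ, hσ⟩ := hqW z.1 hz
    have hxU : z.1.2 ∈ U (σ (Fin.last m)) := by
      have := hσ (Fin.last m)
      simpa using this
    have hopen : IsOpen {w : {z : SymPow T m × T // (q z).Simple} |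
        w.1.2 ∈ U (σ (Fin.last m))} :=
      (hUo _).preimage (continuous_snd.comp continuous_subtype_val)
    have hev : (fun w : {z : SymPow T m × T // (q z).Simple} => nind U w.1.2)
        =ᶠ[nhds z] fun _ => σ (Fin.last m) :=
      Filter.eventuallyEq_of_mem (hopen.mem_nhds hxU) fun w hw => nind_eq hUd hw
    exact hev.continuousAt
  · -- continuousOn_invFun
    have hrep : ContinuousOn (fun p : UConf T (m + 1) × Fin (m + 1) => nrep U f p.1.1)
        ((Subtype.val ⁻¹' wSet U) ×ˢ (univ : Set (Fin (m + 1)))) :=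
      (continuousOn_nrep hUo hUd f).comp
        ((continuous_subtype_val.comp continuous_fst).continuousOn) fun p hp => hp.1
    rintro ⟨v₀, i₀⟩ hp₀
    have hFi : ContinuousWithinAt (fun p : UConf T (m + 1) × Fin (m + 1) =>
        ((SymPow.mk (nrep U f p.1.1 ∘ i₀.succAbove), nrep U f p.1.1 i₀) : SymPow T m × T))
        ((Subtype.val ⁻¹' wSet U) ×ˢ (univ : Set (Fin (m + 1)))) (v₀, i₀) := by
      have hp₀' : ((v₀, i₀) : UConf T (m + 1) × Fin (m + 1)) ∈
          (Subtype.val ⁻¹' wSet U) ×ˢ (univ : Set (Fin (m + 1))) := hp₀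
      have houter : Continuous (fun g : Fin (m + 1) → T => SymPow.mk (g ∘ i₀.succAbove)) :=
        continuous_mk.comp (continuous_pi fun j => continuous_apply (i₀.succAbove j))
      have houter2 : Continuous (fun g : Fin (m + 1) → T => g i₀) := continuous_apply i₀
      refine ContinuousWithinAt.prodMk ?_ ?_
      · exact (houter.comp_continuousOn hrep).continuousWithinAt hp₀'
      · exact (houter2.comp_continuousOn hrep).continuousWithinAt hp₀'
    rw [(⟨rfl⟩ : Topology.IsInducing (Subtype.val : {z : SymPow T m × T // (q z).Simple} → _)).continuousWithinAt_iff]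
    have hslice : ((univ : Set (UConf T (m + 1))) ×ˢ ({i₀} : Set (Fin (m + 1))))
        ∈ nhdsWithin ((v₀, i₀) : UConf T (m + 1) × Fin (m + 1))
          ((Subtype.val ⁻¹' wSet U) ×ˢ (univ : Set (Fin (m + 1)))) :=
      mem_nhdsWithin_of_mem_nhds ((isOpen_univ.prod (isOpen_discrete _)).mem_nhds ⟨trivial, rfl⟩)
    refine hFi.congr_of_eventuallyEq ?_ ?_
    · filter_upwards [self_mem_nhdsWithin, hslice] with p hpT hpS
      have hpw : p.1.1 ∈ wSet U := hpT.1
      have hpi : p.2 = i₀ := hpS.2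
      show Subtype.val _ = _
      simp only [dif_pos hpw, hpi]
    · have hv₀ : ((v₀, i₀).1 : UConf T (m + 1)).1 ∈ wSet U := hp₀.1
      show Subtype.val _ = _
      simp only [dif_pos hv₀]
  · -- y ∈ baseSet
    show y.1 ∈ wSet U
    rw [← hfy]
    exact mem_wSet_mk_iff.mpr (box_subset_sat fun j => hfU j)

theorem fiber_card [TopologicalSpace T] {m : ℕ}
    (q : SymPow T m × T → SymPow T (m + 1))
    (hq : ∀ (g : Fin m → T) (x : T), q (SymPow.mk g, x) = SymPow.mk (Fin.snoc g x))
    (y : UConf T (m + 1)) :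
    Nat.card {z : {z : SymPow T m × T // (q z).Simple} // q z.1 = y.1} = m + 1 := by
  obtain ⟨f, hfinj, hfy⟩ := y.2
  have hsim : ∀ i : Fin (m + 1),
      (q (SymPow.mk (f ∘ i.succAbove), f i)).Simple ∧
        q (SymPow.mk (f ∘ i.succAbove), f i) = y.1 := by
    intro i
    have heq : q (SymPow.mk (f ∘ i.succAbove), f i) = SymPow.mk f := by
      rw [hq, mk_snoc_succAbove]
    refine ⟨?_, heq.trans hfy⟩
    rw [heq]
    exact ⟨f, hfinj, rfl⟩
  set F : Fin (m + 1) → {z : {z : SymPow T m × T // (q z).Simple} // q z.1 = y.1} :=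
    fun i => ⟨⟨(SymPow.mk (f ∘ i.succAbove), f i), (hsim i).1⟩, (hsim i).2⟩ with hF
  have hbij : Function.Bijective F := by
    constructor
    · intro i j hij
      have : f i = f j := congrArg (fun z => z.1.1.2) hij
      exact hfinj this
    · rintro ⟨⟨⟨c, x⟩, hz⟩, hzy⟩
      have hzy' : q (c, x) = y.1 := hzy
      obtain ⟨g₀, rfl⟩ := mk_surjective c
      have hmk : SymPow.mk f = SymPow.mk (Fin.snoc g₀ x) := by
        rw [hfy, ← hzy', hq]
      obtain ⟨σ, hσ⟩ := mk_eq_mk_iff.mp hmk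
      have hx : f (σ (Fin.last m)) = x := by
        have := congrFun hσ (Fin.last m)
        simpa using this
      obtain ⟨π, hπ⟩ := exists_perm_factor σ (σ (Fin.last m)) rfl
      have hc : SymPow.mk (f ∘ (σ (Fin.last m)).succAbove) = SymPow.mk g₀ := by
        rw [← mk_comp_perm (f ∘ (σ (Fin.last m)).succAbove) π]
        congr 1
        funext j
        show f ((σ (Fin.last m)).succAbove (π j)) = g₀ j
        rw [hπ j]
        have := congrFun hσ (Fin.castSucc j)
        simpa using this
      exact ⟨σ (Fin.last m), Subtype.ext (Subtype.ext (Prod.ext hc hx))⟩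
  have hcard := Nat.card_eq_of_bijective F hbij
  rw [← hcard, Nat.card_eq_fintype_card, Fintype.card_fin]

end SymPowAux

/-- For a Hausdorff space `T` and `d = m + 1 ≥ 1`, the map
`q : Sym^{d-1}(T) × T → Sym^d(T)`, `({x_1,…,x_{d-1}}, x) ↦ {x_1,…,x_{d-1},x}`, restricted to
`PConf_d(T) = q⁻¹(UConf_d(T))`, is a `d`-fold covering map over `UConf_d(T)`. -/
theorem stmt1 (T : Type*) [TopologicalSpace T] [T2Space T] (m : ℕ)
    (q : SymPow T m × T → SymPow T (m + 1))
    (hq : ∀ (g : Fin m → T) (x : T), q (SymPow.mk g, x) = SymPow.mk (Fin.snoc g x)) :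
    IsCoveringMap
      (fun z : {z : SymPow T m × T // (q z).Simple} =>
        (⟨q z.1, z.2⟩ : UConf T (m + 1))) ∧
    ∀ y : UConf T (m + 1),
      Nat.card {z : {z : SymPow T m × T // (q z).Simple} // q z.1 = y.1} = m + 1 := by
  constructor
  · exact IsCoveringMap.mk _ (fun _ => Fin (m + 1))
      (fun y => (SymPowAux.exists_trivialization q hq y).choose)
      (fun y => (SymPowAux.exists_trivialization q hq y).choose_spec)
  · exact fun y => SymPowAux.fiber_card q hq y
end

section
/- Let T_i be an oriented circle and A ⊂ T_i a finite subset with n ≥ 1 elements. For any loop L in UConf_n(T_i) based at A, the monodromy permutation μ_L : A → A preserves the cyclic order on A induced by the orientation; consequently μ_L is a power of the canonical rotation ν of A. -/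
instance : Fact ((0 : ℝ) < 1) := ⟨zero_lt_one⟩

/-- The standard oriented circle `ℝ/ℤ` (with the circular order induced by the standard
orientation). -/
abbrev Circ : Type := AddCircle (1 : ℝ)


open AddCircle Set

section CircLemmas
variable {p : ℝ} [hp : Fact (0 < p)]

noncomputable def circG (x y : AddCircle p) : ℝ := (equivIoc p 0 (y - x) : ℝ)

lemma circG_inj (x : AddCircle p) {y z : AddCircle p} (h : circG x y = circG x z) : y = z := by
  have := (equivIoc p 0).injective (Subtype.ext h)
  exact sub_left_injective this

lemma circG_coe (x y : ℝ) :
    circG (x : AddCircle p) (y : AddCircle p) = toIocMod hp.out 0 (y - x) := by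
  have : ((y : AddCircle p) - (x : AddCircle p)) = ((y - x : ℝ) : AddCircle p) := by
    exact (AddCircle.coe_sub p y x).symm
  rw [circG, this]
  rfl

lemma btw_iff_circG {x y z : AddCircle p} (hxy : y ≠ x) : btw x y z ↔ circG x y ≤ circG x z := by
  induction x using QuotientAddGroup.induction_on with | H x =>
  induction y using QuotientAddGroup.induction_on with | H y =>
  induction z using QuotientAddGroup.induction_on with | H z =>
  rw [QuotientAddGroup.btw_coe_iff', circG_coe, circG_coe]
  have hmod : ¬ (0 : ℝ) ≡ (y - x) [PMOD p] := by
    rw [AddCommGroup.modEq_iff_eq_mod_zmultiples]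
    intro h
    apply hxy
    have : ((y - x : ℝ) : AddCircle p) = 0 := h.symm.trans (QuotientAddGroup.mk_zero _)
    have h2 : ((y : AddCircle p) - x) = 0 := by
      rw [← this]; exact (AddCircle.coe_sub p y x).symm
    rw [sub_eq_zero] at h2
    exact h2
  rw [(AddCommGroup.not_modEq_iff_toIcoMod_eq_toIocMod hp.out).1 hmod]

lemma sbtw_iff_circG {x y z : AddCircle p} (hxy : x ≠ y) (hxz : x ≠ z) (hyz : y ≠ z) :
    sbtw x y z ↔ circG x y < circG x z := by
  constructor
  · intro h
    exact lt_of_le_of_ne ((btw_iff_circG hxy.symm).1 h.btw)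
      (fun e => hyz (circG_inj x e))
  · intro h
    refine sbtw_of_btw_not_btw ((btw_iff_circG hxy.symm).2 h.le) (fun hb => ?_)
    have := (btw_iff_circG hxz.symm).1 hb.cyclic_right
    exact absurd this (not_le.mpr h)

end CircLemmas
section CircTop
variable {p : ℝ} [hp : Fact (0 < p)]

lemma continuous_circG {X : Type*} [TopologicalSpace X] {f g : X → AddCircle p}
    (hf : Continuous f) (hg : Continuous g) (hne : ∀ t, f t ≠ g t) :
    Continuous fun t => circG (f t) (g t) := by
  unfold circG
  rw [continuous_iff_continuousAt]
  intro t
  have h0 : g t - f t ≠ ((0 : ℝ) : AddCircle p) := by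
    simpa [sub_eq_zero] using fun h => hne t h.symm
  have h1 : ContinuousAt (fun w : AddCircle p => ((equivIoc p 0 w : ℝ))) (g t - f t) :=
    continuous_subtype_val.continuousAt.comp (continuousAt_equivIoc p 0 h0)
  exact ContinuousAt.comp (g := fun w : AddCircle p => ((equivIoc p 0 w : ℝ)))
    (f := fun t => g t - f t) h1 ((hg.sub hf).continuousAt)

lemma sbtw_end {x y z : unitInterval → AddCircle p}
    (hx : Continuous x) (hy : Continuous y) (hz : Continuous z)
    (hxy : ∀ t, x t ≠ y t) (hxz : ∀ t, x t ≠ z t) (hyz : ∀ t, y t ≠ z t)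
    (h0 : sbtw (x 0) (y 0) (z 0)) : sbtw (x 1) (y 1) (z 1) := by
  set F : unitInterval → ℝ := fun t => circG (x t) (y t) - circG (x t) (z t) with hF
  have hFc : Continuous F :=
    (continuous_circG hx hy hxy).sub (continuous_circG hx hz hxz)
  have hFne : ∀ t, F t ≠ 0 := fun t h => hyz t (circG_inj _ (sub_eq_zero.mp h))
  have hF0 : F 0 < 0 := sub_neg.mpr ((sbtw_iff_circG (hxy 0) (hxz 0) (hyz 0)).1 h0)
  have hF1 : F 1 < 0 := by
    rcases lt_or_gt_of_ne (hFne 1) with h | h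
    · exact h
    · exfalso
      obtain ⟨t, ht⟩ := intermediate_value_univ (0 : unitInterval) 1 hFc ⟨hF0.le, h.le⟩
      exact hFne t ht
  exact (sbtw_iff_circG (hxy 1) (hxz 1) (hyz 1)).2 (sub_neg.mp hF1)

end CircTop

def SbtwFin {n : ℕ} (i j k : Fin n) : Prop :=
  (i < j ∧ j < k) ∨ (j < k ∧ k < i) ∨ (k < i ∧ i < j)

lemma sbtwFin_iff_sub {n : ℕ} {i j k : Fin n} (hij : i ≠ j) (hik : i ≠ k) (hjk : j ≠ k) :
    SbtwFin i j k ↔ j - i < k - i := by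
  have h1 : i.val ≠ j.val := fun h => hij (Fin.ext h)
  have h2 : i.val ≠ k.val := fun h => hik (Fin.ext h)
  have h3 : j.val ≠ k.val := fun h => hjk (Fin.ext h)
  unfold SbtwFin
  fin_omega

lemma sbtwFin_total {n : ℕ} {i j k : Fin n} (hij : i ≠ j) (hik : i ≠ k) (hjk : j ≠ k) :
    SbtwFin i j k ∨ SbtwFin i k j := by
  have h1 : i.val ≠ j.val := fun h => hij (Fin.ext h)
  have h2 : i.val ≠ k.val := fun h => hik (Fin.ext h)
  have h3 : j.val ≠ k.val := fun h => hjk (Fin.ext h)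
  unfold SbtwFin
  fin_omega

lemma perm_eq_rotation {n : ℕ} (hn : 1 ≤ n) (σ : Equiv.Perm (Fin n))
    (hσ : ∀ i j k : Fin n, i ≠ j → i ≠ k → j ≠ k → SbtwFin i j k → SbtwFin (σ i) (σ j) (σ k)) :
    ∃ c : Fin n, ∀ i, σ i = i + c := by
  haveI : NeZero n := ⟨by omega⟩
  set c : Fin n := σ 0 with hc
  set ρ : Equiv.Perm (Fin n) := σ.trans (Equiv.subRight c) with hρdef
  have hρ : ∀ i, ρ i = σ i - c := fun i => rfl
  have hρ0 : ρ 0 = 0 := by simp [hρ, hc]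
  have hρpres : ∀ i j k : Fin n, i ≠ j → i ≠ k → j ≠ k →
      SbtwFin i j k → SbtwFin (ρ i) (ρ j) (ρ k) := by
    intro i j k hij hik hjk h
    have hs := hσ i j k hij hik hjk h
    have d1 : σ i ≠ σ j := fun h' => hij (σ.injective h')
    have d2 : σ i ≠ σ k := fun h' => hik (σ.injective h')
    have d3 : σ j ≠ σ k := fun h' => hjk (σ.injective h')
    have e1 : ρ i ≠ ρ j := fun h' => hij (ρ.injective h')
    have e2 : ρ i ≠ ρ k := fun h' => hik (ρ.injective h')
    have e3 : ρ j ≠ ρ k := fun h' => hjk (ρ.injective h')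
    rw [sbtwFin_iff_sub d1 d2 d3] at hs
    rw [sbtwFin_iff_sub e1 e2 e3, hρ, hρ, hρ, sub_sub_sub_cancel_right,
      sub_sub_sub_cancel_right]
    exact hs
  have hmono : StrictMono ρ := by
    intro i j hij
    by_cases hi : i = 0
    · subst hi
      rw [hρ0]
      have : ρ j ≠ 0 := fun h' => hij.ne' (ρ.injective (h'.trans hρ0.symm))
      exact (Fin.pos_iff_ne_zero' _).mpr this
    · have h0i : (0 : Fin n) < i := (Fin.pos_iff_ne_zero' _).mpr hi
      have h0j : (0 : Fin n) < j := h0i.trans hij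
      have h := hρpres 0 i j (Fin.ne_of_lt h0i) (Fin.ne_of_lt h0j) (Fin.ne_of_lt hij)
        (Or.inl ⟨h0i, hij⟩)
      rw [hρ0] at h
      rcases h with ⟨hh1, hh2⟩ | ⟨hh1, hh2⟩ | ⟨hh1, hh2⟩
      · exact hh2
      · exact absurd hh2 (Fin.zero_le _).not_gt
      · exact absurd hh1 (Fin.zero_le _).not_gt
  haveI : WellFoundedLT (Fin n) := inferInstance
  have hle : ∀ i, i ≤ ρ i := fun i => hmono.le_apply
  have hsum : ∑ i : Fin n, (i : ℕ) = ∑ i : Fin n, ((ρ i : Fin n) : ℕ) :=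
    (Equiv.sum_comp ρ (fun i : Fin n => (i : ℕ))).symm
  have := (Finset.sum_eq_sum_iff_of_le (fun i _ => Fin.le_def.mp (hle i))).1 hsum
  refine ⟨c, fun i => ?_⟩
  have hρi : ρ i = i := Fin.ext ((this i (Finset.mem_univ i)).symm)
  have h2 : σ i - c = i := hρi
  have h3 := sub_add_cancel (σ i) c
  rw [h2] at h3
  exact h3.symm


/-- STATEMENT 7: let `T` be an oriented circle (given by an orientation-parametrization
`e : T ≃ₜ ℝ/ℤ`) and `A = {a 0, …, a (n-1)} ⊆ T` a finite subset with `n ≥ 1` elements,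
enumerated compatibly with the cyclic order induced by the orientation. For any loop `L` in
`UConf_n(T)` based at `A`, with lift `L_1, …, L_n`, the monodromy permutation
`μ_L : a i = L_i(0) ↦ L_i(1)` preserves the induced cyclic order on `A`; consequently `μ_L`
is a power `ν^c` of the canonical rotation `ν : a i ↦ a (i+1 mod n)`. -/
theorem stmt7 (T : Type*) [TopologicalSpace T] (e : T ≃ₜ Circ) (n : ℕ) (hn : 1 ≤ n)
    (a : Fin n → T) (ha : Function.Injective a)
    (hmono : ∀ i j k : Fin n, i < j → j < k → sbtw (e (a i)) (e (a j)) (e (a k)))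
    (L : C(unitInterval, UConf T n))
    (Ls : Fin n → C(unitInterval, T))
    (hlift : ∀ t, (L t).1 = SymPow.mk fun i => Ls i t)
    (hstart : ∀ i, Ls i 0 = a i)
    (hclose : (L 1).1 = SymPow.mk a) :
    (∀ i j k : Fin n, sbtw (e (a i)) (e (a j)) (e (a k)) →
      sbtw (e (Ls i 1)) (e (Ls j 1)) (e (Ls k 1))) ∧
    (∃ c : ℕ, ∀ i : Fin n, Ls i 1 = a ⟨((i : ℕ) + c) % n, Nat.mod_lt _ hn⟩) := by
  -- pairwise distinctness of the lift at every time
  have hdist : ∀ t : unitInterval, Function.Injective fun i => Ls i t := by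
    intro t
    obtain ⟨f, hf, hmk⟩ := (L t).2
    have h : SymPow.mk f = SymPow.mk (fun i => Ls i t) := hmk.trans (hlift t)
    obtain ⟨σ, hσ⟩ := Quotient.exact h
    rw [← hσ]
    exact hf.comp σ.injective
  -- part 1
  have part1 : ∀ i j k : Fin n, sbtw (e (a i)) (e (a j)) (e (a k)) →
      sbtw (e (Ls i 1)) (e (Ls j 1)) (e (Ls k 1)) := by
    intro i j k hs
    have hij : i ≠ j := by rintro rfl; exact sbtw_irrefl_left hs
    have hik : i ≠ k := by rintro rfl; exact sbtw_irrefl_left_right hs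
    have hjk : j ≠ k := by rintro rfl; exact sbtw_irrefl_right hs
    have hce : Continuous (e : T → Circ) := e.continuous
    have hxy : ∀ t : unitInterval, e (Ls i t) ≠ e (Ls j t) :=
      fun t h => hij (hdist t (e.injective h))
    have hxz : ∀ t : unitInterval, e (Ls i t) ≠ e (Ls k t) :=
      fun t h => hik (hdist t (e.injective h))
    have hyz : ∀ t : unitInterval, e (Ls j t) ≠ e (Ls k t) :=
      fun t h => hjk (hdist t (e.injective h))
    have h0 : sbtw (e (Ls i 0)) (e (Ls j 0)) (e (Ls k 0)) := by
      rw [hstart i, hstart j, hstart k]; exact hs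
    exact sbtw_end (hce.comp (Ls i).continuous) (hce.comp (Ls j).continuous)
      (hce.comp (Ls k).continuous) hxy hxz hyz h0
  refine ⟨part1, ?_⟩
  -- part 2
  haveI : NeZero n := ⟨by omega⟩
  have h1 : SymPow.mk (fun i => Ls i 1) = SymPow.mk a := (hlift 1).symm.trans hclose
  obtain ⟨τ, hτ⟩ := Quotient.exact h1
  set σ : Equiv.Perm (Fin n) := τ.symm with hσdef
  have hLs1 : ∀ i, Ls i 1 = a (σ i) := by
    intro i
    have := congrFun hτ (σ i)
    simpa [hσdef] using this
  -- forward direction: SbtwFin implies sbtw for the base points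
  have hfwd : ∀ i j k : Fin n, SbtwFin i j k → sbtw (e (a i)) (e (a j)) (e (a k)) := by
    rintro i j k (⟨u, v⟩ | ⟨u, v⟩ | ⟨u, v⟩)
    · exact hmono i j k u v
    · exact (hmono j k i u v).cyclic_right
    · exact (hmono k i j u v).cyclic_left
  have hpres : ∀ i j k : Fin n, i ≠ j → i ≠ k → j ≠ k →
      SbtwFin i j k → SbtwFin (σ i) (σ j) (σ k) := by
    intro i j k hij hik hjk hs
    have h2 := part1 i j k (hfwd i j k hs)
    rw [hLs1 i, hLs1 j, hLs1 k] at h2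
    have d1 : σ i ≠ σ j := fun h => hij (σ.injective h)
    have d2 : σ i ≠ σ k := fun h => hik (σ.injective h)
    have d3 : σ j ≠ σ k := fun h => hjk (σ.injective h)
    rcases sbtwFin_total d1 d2 d3 with h | h
    · exact h
    · exfalso
      have h3 := hfwd _ _ _ h
      exact (sbtw_asymm h2) h3.cyclic_left
  obtain ⟨c, hc⟩ := perm_eq_rotation hn σ hpres
  refine ⟨c.val, fun i => ?_⟩
  rw [hLs1 i, hc i]
  exact congrArg a (Fin.ext (Fin.val_add _ _))
end
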